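/- arXiv:1403.1270 — 2 statements merged into one kernel-verified Lean document; each statement's English description precedes it below -/
import Mathlib

section
/- If T_1, ..., T_q are 2x2 symplectic matrices (T_i* J T_i = J) depending differentiably on a real parameter E, and each satisfies T_i* J (dT_i/dE) > 0 (positive definite), then their product T = T_q ··· T_1 satisfies T* J (dT/dE) > 0. -/
open Matrix
open scoped ComplexOrder

private lemma posdef_congr {A B : Matrix (Fin 2) (Fin 2) ℂ} (hA : A.PosDef)
    (hB : IsUnit B.det) : (Bᴴ * A * B).PosDef := by
  refine PosDef.of_dotProduct_mulVec_pos (isHermitian_conjTranspose_mul_mul B hA.1) fun x hx => ?_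
  have hBx : B *ᵥ x ≠ 0 := by
    have hinj : Function.Injective (B.mulVec) :=
      mulVec_injective_iff_isUnit.2 ((isUnit_iff_isUnit_det B).2 hB)
    intro h
    exact hx (hinj (by rw [h, mulVec_zero]))
  have : star x ⬝ᵥ (Bᴴ * A * B) *ᵥ x = star (B *ᵥ x) ⬝ᵥ A *ᵥ (B *ᵥ x) := by
    rw [← mulVec_mulVec, ← mulVec_mulVec, dotProduct_mulVec, ← star_mulVec]
  rw [this]
  exact hA.dotProduct_mulVec_pos hBx

private lemma symp_unit_det {J T : Matrix (Fin 2) (Fin 2) ℂ}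
    (hJ : J = !![0, -1; 1, 0]) (h : Tᴴ * J * T = J) : IsUnit T.det := by
  have hdJ : J.det = 1 := by rw [hJ]; simp [Matrix.det_fin_two_of]
  have := congrArg Matrix.det h
  rw [det_mul, det_mul, hdJ, det_conjTranspose, mul_one] at this
  exact IsUnit.of_mul_eq_one _ (by rw [mul_comm] at this; simpa [hdJ] using this)

private lemma key (J : Matrix (Fin 2) (Fin 2) ℂ) (hJ : J = !![0, -1; 1, 0]) :
    ∀ (n : ℕ) (T D : Fin n → ℝ → Matrix (Fin 2) (Fin 2) ℂ)
    (_hD : ∀ (i : Fin n) (E : ℝ) (a b : Fin 2),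
      HasDerivAt (fun x : ℝ => T i x a b) (D i E a b) E)
    (_hsymp : ∀ (i : Fin n) (E : ℝ), (T i E)ᴴ * J * T i E = J)
    (_hpos : ∀ (i : Fin n) (E : ℝ), ((T i E)ᴴ * J * D i E).PosDef)
    (E : ℝ),
    ∃ DQ : Matrix (Fin 2) (Fin 2) ℂ,
      (∀ a b : Fin 2, HasDerivAt
        (fun x : ℝ => ((List.ofFn fun i : Fin n => T i x).reverse).prod a b) (DQ a b) E) ∧
      (((List.ofFn fun i : Fin n => T i E).reverse).prodᴴ * J
          * ((List.ofFn fun i : Fin n => T i E).reverse).prod = J) ∧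
      (((List.ofFn fun i : Fin n => T i E).reverse).prodᴴ * J * DQ).PosSemidef ∧
      (0 < n → (((List.ofFn fun i : Fin n => T i E).reverse).prodᴴ * J * DQ).PosDef) := by
  intro n
  induction n with
  | zero =>
    intro T D hD hsymp hpos E
    refine ⟨0, fun a b => ?_, ?_, ?_, fun h => absurd h (by simp)⟩
    · simp only [List.ofFn_zero, List.reverse_nil, List.prod_nil]
      exact hasDerivAt_const E _
    · simp
    · simp [Matrix.PosSemidef.zero]
  | succ n ih =>
    intro T D hD hsymp hpos E
    obtain ⟨DQ, hDQ, hQsymp, hQsemi, hQpos⟩ :=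
      ih (fun i => T i.succ) (fun i => D i.succ) (fun i => hD i.succ)
        (fun i => hsymp i.succ) (fun i => hpos i.succ) E
    set Qf : ℝ → Matrix (Fin 2) (Fin 2) ℂ :=
      fun x => ((List.ofFn fun i : Fin n => T i.succ x).reverse).prod with hQf
    have hsplit : ∀ x : ℝ,
        ((List.ofFn fun i : Fin (n+1) => T i x).reverse).prod = Qf x * T 0 x := by
      intro x
      rw [List.ofFn_succ, List.reverse_cons, List.prod_append]
      simp [hQf]
    set DP : Matrix (Fin 2) (Fin 2) ℂ := DQ * T 0 E + Qf E * D 0 E with hDPdef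
    have hderiv : ∀ a b : Fin 2, HasDerivAt
        (fun x : ℝ => ((List.ofFn fun i : Fin (n+1) => T i x).reverse).prod a b) (DP a b) E := by
      intro a b
      have : ∀ x : ℝ, ((List.ofFn fun i : Fin (n+1) => T i x).reverse).prod a b
          = ∑ k : Fin 2, Qf x a k * T 0 x k b := by
        intro x; rw [hsplit x, Matrix.mul_apply]
      rw [show (fun x : ℝ => ((List.ofFn fun i : Fin (n+1) => T i x).reverse).prod a b)
          = fun x => ∑ k : Fin 2, Qf x a k * T 0 x k b from funext this]
      have : HasDerivAt (fun x => ∑ k : Fin 2, Qf x a k * T 0 x k b)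
          (∑ k : Fin 2, (DQ a k * T 0 E k b + Qf E a k * D 0 E k b)) E :=
        HasDerivAt.fun_sum fun k _ => (hDQ a k).mul (hD 0 E k b)
      convert this using 1
      simp [hDPdef, Matrix.add_apply, Matrix.mul_apply, Finset.sum_add_distrib]
    set QE := Qf E with hQE
    set T0 := T 0 E with hT0
    have hsymp0 := hsymp 0 E
    have hPsymp : (QE * T0)ᴴ * J * (QE * T0) = J := by
      rw [conjTranspose_mul]
      calc T0ᴴ * QEᴴ * J * (QE * T0) = T0ᴴ * (QEᴴ * J * QE) * T0 := by noncomm_ring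
        _ = T0ᴴ * J * T0 := by rw [hQsymp]
        _ = J := hsymp0
    have hdet0 : IsUnit T0.det := symp_unit_det hJ hsymp0
    have hPform : (QE * T0)ᴴ * J * DP
        = T0ᴴ * (QEᴴ * J * DQ) * T0 + T0ᴴ * J * D 0 E := by
      rw [hDPdef, conjTranspose_mul]
      have h2 : T0ᴴ * QEᴴ * J * (QE * D 0 E) = T0ᴴ * (QEᴴ * J * QE) * D 0 E := by noncomm_ring
      calc T0ᴴ * QEᴴ * J * (DQ * T0 + QE * D 0 E)
          = T0ᴴ * QEᴴ * J * (DQ * T0) + T0ᴴ * QEᴴ * J * (QE * D 0 E) := by noncomm_ring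
        _ = T0ᴴ * (QEᴴ * J * DQ) * T0 + T0ᴴ * (QEᴴ * J * QE) * D 0 E := by
            rw [h2]; noncomm_ring
        _ = T0ᴴ * (QEᴴ * J * DQ) * T0 + T0ᴴ * J * D 0 E := by rw [hQsymp]
    have hsemi1 : (T0ᴴ * (QEᴴ * J * DQ) * T0).PosSemidef := by
      have := hQsemi.conjTranspose_mul_mul_same T0
      simpa [Matrix.mul_assoc] using this
    have hPposdef : ((QE * T0)ᴴ * J * DP).PosDef := by
      rw [hPform]
      exact Matrix.PosDef.posSemidef_add hsemi1 (hpos 0 E)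
    refine ⟨DP, hderiv, ?_, ?_, fun _ => ?_⟩ <;>
      simp only [hsplit E] <;> [exact hPsymp; exact hPposdef.posSemidef; exact hPposdef]

theorem product_current_positivity (q : ℕ) (hq : 0 < q)
    (J : Matrix (Fin 2) (Fin 2) ℂ) (hJ : J = !![0, -1; 1, 0])
    (T D : Fin q → ℝ → Matrix (Fin 2) (Fin 2) ℂ)
    (hD : ∀ (i : Fin q) (E : ℝ) (a b : Fin 2),
      HasDerivAt (fun x : ℝ => T i x a b) (D i E a b) E)
    (hsymp : ∀ (i : Fin q) (E : ℝ), (T i E)ᴴ * J * T i E = J)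
    (hpos : ∀ (i : Fin q) (E : ℝ), ((T i E)ᴴ * J * D i E).PosDef)
    (P : ℝ → Matrix (Fin 2) (Fin 2) ℂ)
    (hP : ∀ E : ℝ, P E = ((List.ofFn fun i : Fin q => T i E).reverse).prod)
    (E : ℝ) (DP : Matrix (Fin 2) (Fin 2) ℂ)
    (hDP : ∀ a b : Fin 2, HasDerivAt (fun x : ℝ => P x a b) (DP a b) E) :
    ((P E)ᴴ * J * DP).PosDef := by
  obtain ⟨DQ, hDQ, hsymQ, hsemiQ, hposQ⟩ := key J hJ q T D hD hsymp hpos E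
  have hDPeq : DP = DQ := by
    ext a b
    refine HasDerivAt.unique ?_ (hDQ a b)
    have : (fun x : ℝ => P x a b)
        = fun x : ℝ => ((List.ofFn fun i : Fin q => T i x).reverse).prod a b := by
      funext x; rw [hP x]
    rw [← this]; exact hDP a b
  rw [hDPeq, hP E]
  exact hposQ hq
end

section
/- Suppose T(E) is a differentiable family of 2x2 matrices with T* J T = J and T* J (dT/dE) positive definite, and Ω(E) is a differentiable family of real unit eigenvectors with eigenvalue λ(E), |λ(E)| < 1. Then Ω* T* J (dT/dE) Ω + (1 - |λ|²) Ω* J (dΩ/dE) = 0, and consequently Ω* J (dΩ/dE) < 0. -/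
open Matrix
open scoped ComplexOrder

private lemma key_identity (T DT Jm : Matrix (Fin 2) (Fin 2) ℂ) (v dv : Fin 2 → ℂ) (l D : ℂ)
    (hsymp : Tᴴ * Jm * T = Jm) (heig : T *ᵥ v = l • v) (hsv : star v = v)
    (hder : DT *ᵥ v + T *ᵥ dv = D • v + l • dv)
    (hJv : v ⬝ᵥ (Jm *ᵥ v) = 0) :
    v ⬝ᵥ ((Tᴴ * Jm * DT) *ᵥ v) + (1 - l * star l) * (v ⬝ᵥ (Jm *ᵥ dv)) = 0 := by
  have hu : v ᵥ* (Tᴴ * Jm) = star l • (v ᵥ* Jm) := by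
    rw [← vecMul_vecMul]
    have hvt : v ᵥ* Tᴴ = star l • v := by
      rw [← hsv, ← star_mulVec, heig, star_smul, hsv]
    rw [hvt, smul_vecMul]
  have h1 := congrArg (fun w => (v ᵥ* (Tᴴ * Jm)) ⬝ᵥ w) hder
  simp only [dotProduct_add, dotProduct_smul] at h1
  have e1 : (v ᵥ* (Tᴴ * Jm)) ⬝ᵥ (DT *ᵥ v) = v ⬝ᵥ ((Tᴴ * Jm * DT) *ᵥ v) := by
    rw [dotProduct_mulVec, dotProduct_mulVec, vecMul_vecMul]
  have e2 : (v ᵥ* (Tᴴ * Jm)) ⬝ᵥ (T *ᵥ dv) = v ⬝ᵥ (Jm *ᵥ dv) := by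
    rw [dotProduct_mulVec, vecMul_vecMul, hsymp, ← dotProduct_mulVec]
  have hz : (v ᵥ* (Tᴴ * Jm)) ⬝ᵥ v = 0 := by
    rw [hu, smul_dotProduct, ← dotProduct_mulVec, hJv, smul_zero]
  have e4 : (v ᵥ* (Tᴴ * Jm)) ⬝ᵥ dv = star l * (v ⬝ᵥ (Jm *ᵥ dv)) := by
    rw [hu, smul_dotProduct, ← dotProduct_mulVec, smul_eq_mul]
  rw [e1, e2, hz, e4, smul_eq_mul, smul_eq_mul, mul_zero, zero_add] at h1
  linear_combination h1

theorem eigenvector_winding_negative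
    (J : Matrix (Fin 2) (Fin 2) ℂ) (hJ : J = !![0, -1; 1, 0])
    (Jr : Matrix (Fin 2) (Fin 2) ℝ) (hJr : Jr = !![0, -1; 1, 0])
    (T DT : ℝ → Matrix (Fin 2) (Fin 2) ℂ)
    (hDT : ∀ (E : ℝ) (a b : Fin 2), HasDerivAt (fun x : ℝ => T x a b) (DT E a b) E)
    (hsymp : ∀ E : ℝ, (T E)ᴴ * J * T E = J)
    (hpos : ∀ E : ℝ, ((T E)ᴴ * J * DT E).PosDef)
    (Omega DOmega : ℝ → Fin 2 → ℝ)
    (hDOm : ∀ (E : ℝ) (i : Fin 2), HasDerivAt (fun x : ℝ => Omega x i) (DOmega E i) E)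
    (hunit : ∀ E : ℝ, Omega E ⬝ᵥ Omega E = 1)
    (lam : ℝ → ℂ)
    (heig : ∀ E : ℝ, (T E).mulVec (fun i => (Omega E i : ℂ)) =
      lam E • (fun i => (Omega E i : ℂ)))
    (hcontr : ∀ E : ℝ, ‖lam E‖ < 1)
    (E : ℝ) :
    (fun i => (Omega E i : ℂ)) ⬝ᵥ ((T E)ᴴ * J * DT E).mulVec (fun i => (Omega E i : ℂ)) +
        (1 - (‖lam E‖ : ℂ)^2) *
          ((fun i => (Omega E i : ℂ)) ⬝ᵥ J.mulVec (fun i => (DOmega E i : ℂ))) = 0 ∧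
    Omega E ⬝ᵥ Jr.mulVec (DOmega E) < 0 := by
  set v : Fin 2 → ℂ := fun i => (Omega E i : ℂ) with hvdef
  set dv : Fin 2 → ℂ := fun i => (DOmega E i : ℂ) with hdvdef
  have hvC : ∀ (x : ℝ) (i : Fin 2),
      HasDerivAt (fun y : ℝ => ((Omega y i : ℝ) : ℂ)) ((DOmega x i : ℂ)) x :=
    fun x i => (hDOm x i).ofReal_comp
  -- W x i = (T x *ᵥ complexified Omega x) i, written out
  set W : ℝ → Fin 2 → ℂ :=
    fun x i => T x i 0 * (Omega x 0 : ℂ) + T x i 1 * (Omega x 1 : ℂ) with hWdef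
  have hW : ∀ i : Fin 2, HasDerivAt (fun x => W x i)
      (DT E i 0 * v 0 + T E i 0 * dv 0 + (DT E i 1 * v 1 + T E i 1 * dv 1)) E :=
    fun i => ((hDT E i 0).mul (hvC E 0)).add ((hDT E i 1).mul (hvC E 1))
  have hWeq : ∀ (x : ℝ) (i : Fin 2), W x i = lam x * (Omega x i : ℂ) := by
    intro x i
    have h := congrFun (heig x) i
    simpa [Matrix.mulVec, dotProduct, Fin.sum_univ_two, hWdef] using h
  -- a nonzero coordinate
  obtain ⟨i0, hi0⟩ : ∃ i, Omega E i ≠ 0 := by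
    by_contra hc
    push_neg at hc
    have h1 := hunit E
    simp [dotProduct, Fin.sum_univ_two, hc 0, hc 1] at h1
  have hvi0 : (Omega E i0 : ℂ) ≠ 0 := by exact_mod_cast hi0
  -- lam is differentiable at E
  have hevent : ∀ᶠ x in nhds E, ((Omega x i0 : ℝ) : ℂ) ≠ 0 :=
    (hvC E i0).continuousAt.eventually_ne hvi0
  have hq := (hW i0).div (hvC E i0) hvi0
  have hlameq : lam =ᶠ[nhds E] fun x => W x i0 / (Omega x i0 : ℂ) :=
    hevent.mono fun x hx => by
      show lam x = W x i0 / ((Omega x i0 : ℝ) : ℂ)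
      rw [hWeq x i0, mul_div_cancel_right₀ _ hx]
  have hD : HasDerivAt lam _ E := hq.congr_of_eventuallyEq hlameq
  set D : ℂ := (DT E i0 0 * v 0 + T E i0 0 * dv 0 + (DT E i0 1 * v 1 + T E i0 1 * dv 1)) *
      ↑(Omega E i0) - W E i0 * ↑(DOmega E i0) with hDdef
  -- componentwise derivative identity
  have eqd : ∀ i : Fin 2,
      DT E i 0 * v 0 + T E i 0 * dv 0 + (DT E i 1 * v 1 + T E i 1 * dv 1)
        = (D / (Omega E i0 : ℂ) ^ 2) * v i + lam E * dv i := by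
    intro i
    have hlhs : HasDerivAt (fun x => lam x * (Omega x i : ℂ))
        (DT E i 0 * v 0 + T E i 0 * dv 0 + (DT E i 1 * v 1 + T E i 1 * dv 1)) E := by
      have hfe : (fun x => lam x * (Omega x i : ℂ)) = fun x => W x i :=
        funext fun x => (hWeq x i).symm
      rw [hfe]; exact hW i
    have hrhs : HasDerivAt (fun x => lam x * (Omega x i : ℂ))
        ((D / (Omega E i0 : ℂ) ^ 2) * v i + lam E * dv i) E := hD.mul (hvC E i)
    exact hlhs.unique hrhs
  have hder : DT E *ᵥ v + T E *ᵥ dv = (D / (Omega E i0 : ℂ) ^ 2) • v + lam E • dv := by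
    funext i
    have h := eqd i
    simp only [Pi.add_apply, Pi.smul_apply, smul_eq_mul, Matrix.mulVec, dotProduct,
      Fin.sum_univ_two]
    linear_combination h
  have hsv : star v = v := by
    funext i; simp [hvdef, Complex.conj_ofReal]
  have hJv : v ⬝ᵥ (J *ᵥ v) = 0 := by
    simp [hJ, hvdef, Matrix.mulVec, dotProduct, Fin.sum_univ_two]
    ring
  have key := key_identity (T E) (DT E) J v dv (lam E) (D / (Omega E i0 : ℂ) ^ 2)
    (hsymp E) (by simpa [hvdef] using heig E) hsv hder hJv
  have habs : (1 - ((‖lam E‖ : ℝ) : ℂ) ^ 2) = 1 - lam E * star (lam E) := by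
    rw [← Complex.ofReal_pow, Complex.sq_norm, Complex.normSq_eq_conj_mul_self,
      Complex.star_def, mul_comm]
  have part1 : v ⬝ᵥ ((T E)ᴴ * J * DT E).mulVec v +
      (1 - (‖lam E‖ : ℂ) ^ 2) * (v ⬝ᵥ J.mulVec dv) = 0 := by
    rw [habs]; exact key
  refine ⟨part1, ?_⟩
  -- second part
  set r : ℝ := Omega E ⬝ᵥ Jr.mulVec (DOmega E) with hrdef
  have hr : v ⬝ᵥ J.mulVec dv = (r : ℂ) := by
    simp [hJ, hJr, hrdef, hvdef, hdvdef, Matrix.mulVec, dotProduct, Fin.sum_univ_two]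
    try push_cast
    try ring
  have hvne : v ≠ 0 := fun h => hvi0 (by simpa [hvdef] using congrFun h i0)
  have hposval := (hpos E).dotProduct_mulVec_pos hvne
  rw [hsv] at hposval
  set a : ℝ := ‖lam E‖ with hadef
  have ht : v ⬝ᵥ ((T E)ᴴ * J * DT E).mulVec v = ((-((1 - a ^ 2) * r) : ℝ) : ℂ) := by
    rw [hr] at part1
    push_cast
    linear_combination part1
  rw [ht] at hposval
  have h2 : (0 : ℝ) < -((1 - a ^ 2) * r) := Complex.zero_lt_real.mp hposval
  have ha1 : a < 1 := hcontr E
  have ha0 : 0 ≤ a := norm_nonneg _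
  have ha2 : 0 < 1 - a ^ 2 := by nlinarith
  by_contra hge
  push_neg at hge
  nlinarith [mul_nonneg ha2.le hge]
end
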